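/- Let C be a semisimple abelian monoidal category and A a special Frobenius algebra in C. Then the category C_A of left A-modules is semisimple: every A-module is projective (equivalently, a direct sum of simple modules). -/

import Mathlib

open CategoryTheory MonoidalCategory

/-- Scalar action of the ground ring `End(𝟙)` on morphisms. -/
def usmul {C : Type*} [Category C] [MonoidalCategory C] {X Y : C}
    (β : 𝟙_ C ⟶ 𝟙_ C) (f : X ⟶ Y) : X ⟶ Y :=
  (λ_ X).inv ≫ (β ▷ X) ≫ (λ_ X).hom ≫ f

namespace Stmt18Aux
variable {C : Type*} [Category C] [MonoidalCategory C]

theorem usmul_id' {X Y : C} (f : X ⟶ Y) : usmul (𝟙 (𝟙_ C)) f = f := by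
  simp [usmul]

theorem usmul_comp {X Y Z : C} (β : 𝟙_ C ⟶ 𝟙_ C) (f : X ⟶ Y) (g : Y ⟶ Z) :
    usmul β f ≫ g = usmul β (f ≫ g) := by
  simp [usmul]

theorem comp_usmul {X Y Z : C} (β : 𝟙_ C ⟶ 𝟙_ C) (f : X ⟶ Y) (g : Y ⟶ Z) :
    f ≫ usmul β g = usmul β (f ≫ g) := by
  simp only [usmul]
  rw [leftUnitor_inv_naturality_assoc, whisker_exchange_assoc,
    leftUnitor_naturality_assoc]

theorem usmul_usmul {X Y : C} (β γ : 𝟙_ C ⟶ 𝟙_ C) (f : X ⟶ Y) :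
    usmul β (usmul γ f) = usmul (β ≫ γ) f := by
  simp [usmul, comp_whiskerRight]

theorem usmul_unit (β : 𝟙_ C ⟶ 𝟙_ C) : usmul β (𝟙 (𝟙_ C)) = β := by
  simp only [usmul, Category.comp_id, unitors_inv_equal, unitors_equal]
  rw [rightUnitor_naturality]
  simp

variable {A : C} {m : A ⊗ A ⟶ A} {η : 𝟙_ C ⟶ A} {Δ : A ⟶ A ⊗ A}

theorem K1 (frob₁ : (Δ ▷ A) ≫ (α_ A A A).hom ≫ (A ◁ m) = m ≫ Δ)
    (one_mul : (η ▷ A) ≫ m = (λ_ A).hom) :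
    ((η ≫ Δ) ▷ A) ≫ (α_ A A A).hom ≫ (A ◁ m) = (λ_ A).hom ≫ Δ := by
  rw [comp_whiskerRight, Category.assoc, frob₁, ← Category.assoc, one_mul]

theorem K2 (frob₂ : (A ◁ Δ) ≫ (α_ A A A).inv ≫ (m ▷ A) = m ≫ Δ)
    (mul_one : (A ◁ η) ≫ m = (ρ_ A).hom) :
    (A ◁ (η ≫ Δ)) ≫ (α_ A A A).inv ≫ (m ▷ A) = (ρ_ A).hom ≫ Δ := by
  rw [MonoidalCategory.whiskerLeft_comp, Category.assoc, frob₂, ← Category.assoc, mul_one]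

theorem K3L (mul_assoc : (m ▷ A) ≫ m = (α_ A A A).hom ≫ (A ◁ m) ≫ m)
    (frob₁ : (Δ ▷ A) ≫ (α_ A A A).hom ≫ (A ◁ m) = m ≫ Δ)
    (one_mul : (η ▷ A) ≫ m = (λ_ A).hom) :
    ((η ≫ Δ ≫ m) ▷ A) ≫ m = (λ_ A).hom ≫ Δ ≫ m := by
  calc ((η ≫ Δ ≫ m) ▷ A) ≫ m = ((η ≫ Δ) ▷ A) ≫ (m ▷ A) ≫ m := by
        simp [comp_whiskerRight]
    _ = ((η ≫ Δ) ▷ A) ≫ (α_ A A A).hom ≫ (A ◁ m) ≫ m := by rw [mul_assoc]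
    _ = (λ_ A).hom ≫ Δ ≫ m := by rw [reassoc_of% (K1 frob₁ one_mul)]

theorem K3R (mul_assoc : (m ▷ A) ≫ m = (α_ A A A).hom ≫ (A ◁ m) ≫ m)
    (frob₂ : (A ◁ Δ) ≫ (α_ A A A).inv ≫ (m ▷ A) = m ≫ Δ)
    (mul_one : (A ◁ η) ≫ m = (ρ_ A).hom) :
    (A ◁ (η ≫ Δ ≫ m)) ≫ m = (ρ_ A).hom ≫ Δ ≫ m := by
  have h := K2 frob₂ mul_one
  have hmm : (A ◁ m) ≫ m = (α_ A A A).inv ≫ (m ▷ A) ≫ m := by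
    rw [mul_assoc, Iso.inv_hom_id_assoc]
  calc (A ◁ (η ≫ Δ ≫ m)) ≫ m = (A ◁ (η ≫ Δ)) ≫ (A ◁ m) ≫ m := by
        simp [MonoidalCategory.whiskerLeft_comp]
    _ = (A ◁ (η ≫ Δ)) ≫ (α_ A A A).inv ≫ (m ▷ A) ≫ m := by rw [hmm]
    _ = (ρ_ A).hom ≫ Δ ≫ m := by rw [reassoc_of% h]

theorem casL (hK1 : ((η ≫ Δ) ▷ A) ≫ (α_ A A A).hom ≫ (A ◁ m) = (λ_ A).hom ≫ Δ)
    (X : C) :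
    (λ_ (A ⊗ X)).inv ≫ ((η ≫ Δ) ▷ (A ⊗ X)) ≫ (α_ A A (A ⊗ X)).hom ≫
      (A ◁ (α_ A A X).inv) ≫ (A ◁ (m ▷ X)) = (Δ ▷ X) ≫ (α_ A A X).hom := by
  have pent : (α_ A A (A ⊗ X)).hom ≫ (A ◁ (α_ A A X).inv) =
      (α_ (A ⊗ A) A X).inv ≫ ((α_ A A A).hom ▷ X) ≫ (α_ A (A ⊗ A) X).hom := by
    coherence
  have collect : (((η ≫ Δ) ▷ A) ▷ X) ≫ ((α_ A A A).hom ▷ X) ≫ ((A ◁ m) ▷ X) =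
      ((λ_ A).hom ▷ X) ≫ (Δ ▷ X) := by
    rw [← comp_whiskerRight, ← comp_whiskerRight, hK1, comp_whiskerRight]
  have pre : (λ_ (A ⊗ X)).inv ≫ (α_ (𝟙_ C) A X).inv ≫ ((λ_ A).hom ▷ X) = 𝟙 (A ⊗ X) := by
    coherence
  rw [reassoc_of% pent, ← associator_naturality_middle,
    associator_inv_naturality_left_assoc, reassoc_of% collect, reassoc_of% pre]

theorem casR (hK2 : (A ◁ (η ≫ Δ)) ≫ (α_ A A A).inv ≫ (m ▷ A) = (ρ_ A).hom ≫ Δ)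
    (X : C) :
    (A ◁ (λ_ X).inv) ≫ (A ◁ ((η ≫ Δ) ▷ X)) ≫ (A ◁ (α_ A A X).hom) ≫
      (α_ A A (A ⊗ X)).inv ≫ (m ▷ (A ⊗ X)) = (Δ ▷ X) ≫ (α_ A A X).hom := by
  have pent : (A ◁ (α_ A A X).hom) ≫ (α_ A A (A ⊗ X)).inv =
      (α_ A (A ⊗ A) X).inv ≫ ((α_ A A A).inv ▷ X) ≫ (α_ (A ⊗ A) A X).hom := by
    coherence
  have collect : ((A ◁ (η ≫ Δ)) ▷ X) ≫ ((α_ A A A).inv ▷ X) ≫ ((m ▷ A) ▷ X) =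
      ((ρ_ A).hom ▷ X) ≫ (Δ ▷ X) := by
    rw [← comp_whiskerRight, ← comp_whiskerRight, hK2, comp_whiskerRight]
  have pre : (A ◁ (λ_ X).inv) ≫ (α_ A (𝟙_ C) X).inv ≫ ((ρ_ A).hom ▷ X) = 𝟙 (A ⊗ X) := by
    coherence
  rw [reassoc_of% pent, ← associator_naturality_left,
    associator_inv_naturality_middle_assoc, reassoc_of% collect, reassoc_of% pre]

/-- The averaged morphism is a module morphism. -/
theorem Emod {X Y : C} (ρX : A ⊗ X ⟶ X) (ρY : A ⊗ Y ⟶ Y)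
    (hXmul : (m ▷ X) ≫ ρX = (α_ A A X).hom ≫ (A ◁ ρX) ≫ ρX)
    (hYmul : (m ▷ Y) ≫ ρY = (α_ A A Y).hom ≫ (A ◁ ρY) ≫ ρY)
    (hK1 : ((η ≫ Δ) ▷ A) ≫ (α_ A A A).hom ≫ (A ◁ m) = (λ_ A).hom ≫ Δ)
    (hK2 : (A ◁ (η ≫ Δ)) ≫ (α_ A A A).inv ≫ (m ▷ A) = (ρ_ A).hom ≫ Δ)
    (t : X ⟶ Y) :
    ρX ≫ ((λ_ X).inv ≫ ((η ≫ Δ) ▷ X) ≫ (α_ A A X).hom ≫ (A ◁ ρX) ≫ (A ◁ t) ≫ ρY) =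
      (A ◁ ((λ_ X).inv ≫ ((η ≫ Δ) ▷ X) ≫ (α_ A A X).hom ≫ (A ◁ ρX) ≫ (A ◁ t) ≫ ρY)) ≫ ρY := by
  have hX' : (A ◁ ρX) ≫ ρX = (α_ A A X).inv ≫ (m ▷ X) ≫ ρX := by
    rw [hXmul, Iso.inv_hom_id_assoc]
  have hY' : (A ◁ ρY) ≫ ρY = (α_ A A Y).inv ≫ (m ▷ Y) ≫ ρY := by
    rw [hYmul, Iso.inv_hom_id_assoc]
  have lhs : ρX ≫ ((λ_ X).inv ≫ ((η ≫ Δ) ▷ X) ≫ (α_ A A X).hom ≫ (A ◁ ρX) ≫ (A ◁ t) ≫ ρY) =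
      (Δ ▷ X) ≫ (α_ A A X).hom ≫ (A ◁ ρX) ≫ (A ◁ t) ≫ ρY := by
    rw [leftUnitor_inv_naturality_assoc, whisker_exchange_assoc,
      associator_naturality_right_assoc, ← MonoidalCategory.whiskerLeft_comp_assoc,
      hX']
    simp only [MonoidalCategory.whiskerLeft_comp, Category.assoc]
    rw [reassoc_of% (casL hK1 X)]
  have rhs : (A ◁ ((λ_ X).inv ≫ ((η ≫ Δ) ▷ X) ≫ (α_ A A X).hom ≫ (A ◁ ρX) ≫ (A ◁ t) ≫ ρY)) ≫ ρY =
      (Δ ▷ X) ≫ (α_ A A X).hom ≫ (A ◁ ρX) ≫ (A ◁ t) ≫ ρY := by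
    simp only [MonoidalCategory.whiskerLeft_comp, Category.assoc]
    rw [hY', associator_inv_naturality_right_assoc, whisker_exchange_assoc,
      associator_inv_naturality_right_assoc, whisker_exchange_assoc,
      reassoc_of% (casR hK2 X)]
  rw [lhs, rhs]

/-- Averaging a module morphism gives `βA` times it. -/
theorem Eavg {X Y : C} (βA : 𝟙_ C ⟶ 𝟙_ C) (ρX : A ⊗ X ⟶ X) (ρY : A ⊗ Y ⟶ Y)
    (hu : η ≫ Δ ≫ m = βA ≫ η)
    (hYone : (η ▷ Y) ≫ ρY = (λ_ Y).hom)
    (hYmul : (m ▷ Y) ≫ ρY = (α_ A A Y).hom ≫ (A ◁ ρY) ≫ ρY)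
    (t : X ⟶ Y) (ht : ρX ≫ t = (A ◁ t) ≫ ρY) :
    (λ_ X).inv ≫ ((η ≫ Δ) ▷ X) ≫ (α_ A A X).hom ≫ (A ◁ ρX) ≫ (A ◁ t) ≫ ρY =
      usmul βA t := by
  have hY' : (A ◁ ρY) ≫ ρY = (α_ A A Y).inv ≫ (m ▷ Y) ≫ ρY := by
    rw [hYmul, Iso.inv_hom_id_assoc]
  rw [← MonoidalCategory.whiskerLeft_comp_assoc, ht, MonoidalCategory.whiskerLeft_comp,
    Category.assoc, ← associator_naturality_right_assoc, ← whisker_exchange_assoc,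
    ← leftUnitor_inv_naturality_assoc, hY', Iso.hom_inv_id_assoc,
    ← comp_whiskerRight_assoc, Category.assoc, hu, comp_whiskerRight,
    Category.assoc, hYone]
  rw [show (λ_ Y).inv ≫ βA ▷ Y ≫ (λ_ Y).hom = usmul βA (𝟙 Y) by simp [usmul],
    comp_usmul, Category.comp_id]

/-- Precomposition with a module morphism. -/
theorem Epre {M N Z : C} (ρM : A ⊗ M ⟶ M) (ρN : A ⊗ N ⟶ N)
    (f : M ⟶ N) (hf : ρM ≫ f = (A ◁ f) ≫ ρN) (t : N ⟶ Z) :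
    f ≫ ((λ_ N).inv ≫ ((η ≫ Δ) ▷ N) ≫ (α_ A A N).hom ≫ (A ◁ ρN) ≫ (A ◁ t)) =
      (λ_ M).inv ≫ ((η ≫ Δ) ▷ M) ≫ (α_ A A M).hom ≫ (A ◁ ρM) ≫ (A ◁ (f ≫ t)) := by
  rw [leftUnitor_inv_naturality_assoc, whisker_exchange_assoc,
    associator_naturality_right_assoc]
  have : (A ◁ (A ◁ f)) ≫ (A ◁ ρN) ≫ (A ◁ t) = (A ◁ ρM) ≫ (A ◁ (f ≫ t)) := by
    simp only [← MonoidalCategory.whiskerLeft_comp]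
    rw [← reassoc_of% hf]
  rw [this]

/-- Unit axiom for the induced module. -/
theorem indOne (one_mul : (η ▷ A) ≫ m = (λ_ A).hom) (Z : C) :
    (η ▷ (A ⊗ Z)) ≫ ((α_ A A Z).inv ≫ (m ▷ Z)) = (λ_ (A ⊗ Z)).hom := by
  rw [associator_inv_naturality_left_assoc, ← comp_whiskerRight, one_mul,
    leftUnitor_tensor_hom]

/-- Multiplication axiom for the induced module. -/
theorem indMul (mul_assoc : (m ▷ A) ≫ m = (α_ A A A).hom ≫ (A ◁ m) ≫ m) (Z : C) :
    (m ▷ (A ⊗ Z)) ≫ ((α_ A A Z).inv ≫ (m ▷ Z)) =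
      (α_ A A (A ⊗ Z)).hom ≫ (A ◁ ((α_ A A Z).inv ≫ (m ▷ Z))) ≫
        ((α_ A A Z).inv ≫ (m ▷ Z)) := by
  have coh : (α_ (A ⊗ A) A Z).inv ≫ ((α_ A A A).hom ▷ Z) =
      (α_ A A (A ⊗ Z)).hom ≫ (A ◁ (α_ A A Z).inv) ≫ (α_ A (A ⊗ A) Z).inv := by
    coherence
  rw [associator_inv_naturality_left_assoc, ← comp_whiskerRight, mul_assoc]
  simp only [MonoidalCategory.whiskerLeft_comp, comp_whiskerRight, Category.assoc]
  rw [reassoc_of% coh, associator_inv_naturality_middle_assoc]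

/-- `φ u` composed with the induced-module action of `t_u`. -/
theorem phi_eq {N Z : C} (mul_one : (A ◁ η) ≫ m = (ρ_ A).hom)
    (ρN : A ⊗ N ⟶ N) (u : N ⟶ Z) :
    (λ_ N).inv ≫ ((η ≫ Δ) ▷ N) ≫ (α_ A A N).hom ≫ (A ◁ ρN) ≫
        (A ◁ (u ≫ (λ_ Z).inv ≫ (η ▷ Z))) ≫ ((α_ A A Z).inv ≫ (m ▷ Z)) =
      (λ_ N).inv ≫ ((η ≫ Δ) ▷ N) ≫ (α_ A A N).hom ≫ (A ◁ ρN) ≫ (A ◁ u) := by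
  have key : (A ◁ (u ≫ (λ_ Z).inv ≫ (η ▷ Z))) ≫ ((α_ A A Z).inv ≫ (m ▷ Z)) = A ◁ u := by
    simp only [MonoidalCategory.whiskerLeft_comp, Category.assoc]
    rw [associator_inv_naturality_middle_assoc, ← comp_whiskerRight, mul_one]
    have coh : (A ◁ (λ_ Z).inv) ≫ (α_ A (𝟙_ C) Z).inv ≫ ((ρ_ A).hom ▷ Z) = 𝟙 (A ⊗ Z) := by
      coherence
    rw [coh]
    simp
  rw [key]

/-- Retraction of `φ u` back to `u`. -/
theorem retr {N Z : C} {ε : A ⟶ 𝟙_ C}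
    (counit_left : Δ ≫ (ε ▷ A) = (λ_ A).inv)
    (ρN : A ⊗ N ⟶ N) (hNone : (η ▷ N) ≫ ρN = (λ_ N).hom) (u : N ⟶ Z) :
    ((λ_ N).inv ≫ ((η ≫ Δ) ▷ N) ≫ (α_ A A N).hom ≫ (A ◁ ρN) ≫ (A ◁ u)) ≫
      ((ε ▷ Z) ≫ (λ_ Z).hom) = u := by
  simp only [Category.assoc]
  rw [whisker_exchange_assoc, whisker_exchange_assoc, leftUnitor_naturality,
    leftUnitor_naturality_assoc, ← associator_naturality_left_assoc,
    ← comp_whiskerRight_assoc, Category.assoc, counit_left]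
  have coh : ((λ_ A).inv ▷ N) ≫ (α_ (𝟙_ C) A N).hom ≫ (λ_ (A ⊗ N)).hom = 𝟙 (A ⊗ N) := by
    coherence
  rw [comp_whiskerRight, Category.assoc, reassoc_of% coh, reassoc_of% hNone]
  simp

/-- Scalars act centrally on modules. -/
theorem zetaC {Y : C} (βA : 𝟙_ C ⟶ 𝟙_ C)
    (hu : η ≫ Δ ≫ m = βA ≫ η)
    (hK3L : ((η ≫ Δ ≫ m) ▷ A) ≫ m = (λ_ A).hom ≫ Δ ≫ m)
    (hK3R : (A ◁ (η ≫ Δ ≫ m)) ≫ m = (ρ_ A).hom ≫ Δ ≫ m)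
    (ρY : A ⊗ Y ⟶ Y)
    (hYone : (η ▷ Y) ≫ ρY = (λ_ Y).hom)
    (hYmul : (m ▷ Y) ≫ ρY = (α_ A A Y).hom ≫ (A ◁ ρY) ≫ ρY) :
    ρY ≫ usmul βA (𝟙 Y) = (A ◁ usmul βA (𝟙 Y)) ≫ ρY := by
  have hY' : (A ◁ ρY) ≫ ρY = (α_ A A Y).inv ≫ (m ▷ Y) ≫ ρY := by
    rw [hYmul, Iso.inv_hom_id_assoc]
  have hform : (λ_ Y).inv ≫ ((η ≫ Δ ≫ m) ▷ Y) ≫ ρY = usmul βA (𝟙 Y) := by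
    rw [hu, comp_whiskerRight, Category.assoc, hYone]
    simp [usmul]
  have hL : ρY ≫ (λ_ Y).inv ≫ ((η ≫ Δ ≫ m) ▷ Y) ≫ ρY = ((Δ ≫ m) ▷ Y) ≫ ρY := by
    rw [leftUnitor_inv_naturality_assoc, whisker_exchange_assoc, hY',
      associator_inv_naturality_left_assoc]
    have coh : (λ_ (A ⊗ Y)).inv ≫ (α_ (𝟙_ C) A Y).inv = (λ_ A).inv ▷ Y := by
      coherence
    have collect : ((η ≫ Δ ≫ m) ▷ A) ▷ Y ≫ m ▷ Y = ((λ_ A).hom ≫ Δ ≫ m) ▷ Y := by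
      rw [← comp_whiskerRight, hK3L]
    rw [reassoc_of% coh, reassoc_of% collect]
    simp [comp_whiskerRight]
  have hR : (A ◁ ((λ_ Y).inv ≫ ((η ≫ Δ ≫ m) ▷ Y) ≫ ρY)) ≫ ρY = ((Δ ≫ m) ▷ Y) ≫ ρY := by
    simp only [MonoidalCategory.whiskerLeft_comp, Category.assoc]
    rw [hY', associator_inv_naturality_middle_assoc]
    have coh : (A ◁ (λ_ Y).inv) ≫ (α_ A (𝟙_ C) Y).inv = (ρ_ A).inv ▷ Y := by
      coherence
    have collect : (A ◁ (η ≫ Δ ≫ m)) ▷ Y ≫ m ▷ Y = ((ρ_ A).hom ≫ Δ ≫ m) ▷ Y := by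
      rw [← comp_whiskerRight, hK3R]
    rw [reassoc_of% coh, reassoc_of% collect]
    simp [comp_whiskerRight]
  rw [← hform, hL, ← hR]

end Stmt18Aux

open Stmt18Aux in
/-- For a special Frobenius algebra `A` in a semisimple abelian monoidal
category `C`, the category of left `A`-modules is semisimple: every `A`-module
is projective, i.e. any module morphism out of it lifts along any epimorphism
of modules. -/
theorem stmt18 {C : Type*} [Category C] [MonoidalCategory C] [Abelian C]
    (hss : ∀ Z : C, Projective Z)
    (A : C) (m : A ⊗ A ⟶ A) (η : 𝟙_ C ⟶ A) (Δ : A ⟶ A ⊗ A) (ε : A ⟶ 𝟙_ C)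
    (mul_assoc : (m ▷ A) ≫ m = (α_ A A A).hom ≫ (A ◁ m) ≫ m)
    (one_mul : (η ▷ A) ≫ m = (λ_ A).hom)
    (mul_one : (A ◁ η) ≫ m = (ρ_ A).hom)
    (coassoc : Δ ≫ (Δ ▷ A) ≫ (α_ A A A).hom = Δ ≫ (A ◁ Δ))
    (counit_left : Δ ≫ (ε ▷ A) = (λ_ A).inv)
    (counit_right : Δ ≫ (A ◁ ε) = (ρ_ A).inv)
    (frob₁ : (Δ ▷ A) ≫ (α_ A A A).hom ≫ (A ◁ m) = m ≫ Δ)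
    (frob₂ : (A ◁ Δ) ≫ (α_ A A A).inv ≫ (m ▷ A) = m ≫ Δ)
    (βA βI : 𝟙_ C ⟶ 𝟙_ C) [IsIso βA] [IsIso βI]
    (special₁ : Δ ≫ m = usmul βA (𝟙 A))
    (special₂ : η ≫ ε = βI)
    -- an arbitrary `A`-module `P`
    (P : C) (ρP : A ⊗ P ⟶ P)
    (actP_one : (η ▷ P) ≫ ρP = (λ_ P).hom)
    (actP_mul : (m ▷ P) ≫ ρP = (α_ A A P).hom ≫ (A ◁ ρP) ≫ ρP)
    -- an epimorphism `f : M ⟶ N` in the category of left `A`-modules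
    (M N : C) (ρM : A ⊗ M ⟶ M) (ρN : A ⊗ N ⟶ N)
    (actM_one : (η ▷ M) ≫ ρM = (λ_ M).hom)
    (actM_mul : (m ▷ M) ≫ ρM = (α_ A A M).hom ≫ (A ◁ ρM) ≫ ρM)
    (actN_one : (η ▷ N) ≫ ρN = (λ_ N).hom)
    (actN_mul : (m ▷ N) ≫ ρN = (α_ A A N).hom ≫ (A ◁ ρN) ≫ ρN)
    (f : M ⟶ N) (hf : ρM ≫ f = (A ◁ f) ≫ ρN)
    (hepi : ∀ (Q : C) (ρQ : A ⊗ Q ⟶ Q),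
      (η ▷ Q) ≫ ρQ = (λ_ Q).hom →
      (m ▷ Q) ≫ ρQ = (α_ A A Q).hom ≫ (A ◁ ρQ) ≫ ρQ →
      ∀ u v : N ⟶ Q, ρN ≫ u = (A ◁ u) ≫ ρQ → ρN ≫ v = (A ◁ v) ≫ ρQ →
        f ≫ u = f ≫ v → u = v)
    -- a module morphism from `P` to `N`
    (g' : P ⟶ N) (hg' : ρP ≫ g' = (A ◁ g') ≫ ρN) :
    ∃ g : P ⟶ M, ρP ≫ g = (A ◁ g) ≫ ρM ∧ g ≫ f = g' := by
  have hK1 := K1 frob₁ one_mul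
  have hK2 := K2 frob₂ mul_one
  have hK3L := K3L mul_assoc frob₁ one_mul
  have hK3R := K3R mul_assoc frob₂ mul_one
  have hu : η ≫ Δ ≫ m = βA ≫ η := by
    have h0 : usmul βA (𝟙 (𝟙_ C)) ≫ η = usmul βA η := by
      rw [usmul_comp, Category.id_comp]
    rw [special₁, comp_usmul, Category.comp_id, ← h0, usmul_unit]
  -- Step 1: `f` is an epimorphism in `C`.
  haveI hEpi : Epi f := by
    constructor
    intro Z u v huv
    have h1 := Emod ρN ((α_ A A Z).inv ≫ (m ▷ Z)) actN_mul (indMul mul_assoc Z)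
      hK1 hK2 (u ≫ (λ_ Z).inv ≫ (η ▷ Z))
    rw [phi_eq mul_one ρN u] at h1
    have h2 := Emod ρN ((α_ A A Z).inv ≫ (m ▷ Z)) actN_mul (indMul mul_assoc Z)
      hK1 hK2 (v ≫ (λ_ Z).inv ≫ (η ▷ Z))
    rw [phi_eq mul_one ρN v] at h2
    have hfuv : f ≫ ((λ_ N).inv ≫ ((η ≫ Δ) ▷ N) ≫ (α_ A A N).hom ≫ (A ◁ ρN) ≫ (A ◁ u)) =
        f ≫ ((λ_ N).inv ≫ ((η ≫ Δ) ▷ N) ≫ (α_ A A N).hom ≫ (A ◁ ρN) ≫ (A ◁ v)) := by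
      rw [Epre ρM ρN f hf u, Epre ρM ρN f hf v, huv]
    have heq := hepi (A ⊗ Z) ((α_ A A Z).inv ≫ (m ▷ Z)) (indOne one_mul Z)
      (indMul mul_assoc Z) _ _ h1 h2 hfuv
    calc u = ((λ_ N).inv ≫ ((η ≫ Δ) ▷ N) ≫ (α_ A A N).hom ≫ (A ◁ ρN) ≫ (A ◁ u)) ≫
          ((ε ▷ Z) ≫ (λ_ Z).hom) := (retr counit_left ρN actN_one u).symm
      _ = ((λ_ N).inv ≫ ((η ≫ Δ) ▷ N) ≫ (α_ A A N).hom ≫ (A ◁ ρN) ≫ (A ◁ v)) ≫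
          ((ε ▷ Z) ≫ (λ_ Z).hom) := by rw [heq]
      _ = v := retr counit_left ρN actN_one v
  -- Step 2: lift `g'` at the level of `C`.
  haveI := hss P
  set h : P ⟶ M := Projective.factorThru g' f with hdef
  have hhf : h ≫ f = g' := Projective.factorThru_comp g' f
  -- Step 3: average the lift.
  set E : P ⟶ M := (λ_ P).inv ≫ ((η ≫ Δ) ▷ P) ≫ (α_ A A P).hom ≫ (A ◁ ρP) ≫ (A ◁ h) ≫ ρM
    with hEdef
  have hEmod : ρP ≫ E = (A ◁ E) ≫ ρM := Emod ρP ρM actP_mul actM_mul hK1 hK2 h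
  have hEf : E ≫ f = usmul βA g' := by
    have step : E ≫ f =
        (λ_ P).inv ≫ ((η ≫ Δ) ▷ P) ≫ (α_ A A P).hom ≫ (A ◁ ρP) ≫ (A ◁ (h ≫ f)) ≫ ρN := by
      rw [hEdef]
      simp only [Category.assoc]
      rw [hf]
      simp only [MonoidalCategory.whiskerLeft_comp, Category.assoc]
    rw [step, hhf]
    exact Eavg βA ρP ρN hu actN_one actN_mul g' hg'
  -- scalar inverses
  have hzz : usmul βA (𝟙 M) ≫ usmul (inv βA) (𝟙 M) = 𝟙 M := by
    rw [usmul_comp, Category.id_comp, usmul_usmul, IsIso.hom_inv_id, usmul_id']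
  have hz'z : usmul (inv βA) (𝟙 M) ≫ usmul βA (𝟙 M) = 𝟙 M := by
    rw [usmul_comp, Category.id_comp, usmul_usmul, IsIso.inv_hom_id, usmul_id']
  have zM := zetaC βA hu hK3L hK3R ρM actM_one actM_mul
  have zMi : ρM ≫ usmul (inv βA) (𝟙 M) = (A ◁ usmul (inv βA) (𝟙 M)) ≫ ρM := by
    have e1 : (A ◁ usmul (inv βA) (𝟙 M)) ≫ (A ◁ usmul βA (𝟙 M)) = 𝟙 (A ⊗ M) := by
      rw [← MonoidalCategory.whiskerLeft_comp, hz'z, MonoidalCategory.whiskerLeft_id]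
    have e2 : ρM ≫ usmul (inv βA) (𝟙 M) =
        ((A ◁ usmul (inv βA) (𝟙 M)) ≫ (A ◁ usmul βA (𝟙 M))) ≫ ρM ≫ usmul (inv βA) (𝟙 M) := by
      rw [e1, Category.id_comp]
    rw [e2, Category.assoc, ← reassoc_of% zM, hzz, Category.comp_id]
  refine ⟨usmul (inv βA) E, ?_, ?_⟩
  · have hE' : usmul (inv βA) E = E ≫ usmul (inv βA) (𝟙 M) := by
      rw [comp_usmul, Category.comp_id]
    calc ρP ≫ usmul (inv βA) E = usmul (inv βA) (ρP ≫ E) := comp_usmul _ _ _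
      _ = usmul (inv βA) ((A ◁ E) ≫ ρM) := by rw [hEmod]
      _ = (A ◁ E) ≫ usmul (inv βA) ρM := (comp_usmul _ _ _).symm
      _ = (A ◁ E) ≫ ρM ≫ usmul (inv βA) (𝟙 M) := by
          rw [show usmul (inv βA) ρM = ρM ≫ usmul (inv βA) (𝟙 M) by
            rw [comp_usmul, Category.comp_id]]
      _ = (A ◁ E) ≫ (A ◁ usmul (inv βA) (𝟙 M)) ≫ ρM := by rw [zMi]
      _ = (A ◁ usmul (inv βA) E) ≫ ρM := by
          rw [← MonoidalCategory.whiskerLeft_comp_assoc, ← hE']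
  · rw [usmul_comp, hEf, usmul_usmul, IsIso.inv_hom_id, usmul_id']
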